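/- For a positive integer k, let G be a graph containing S(k) as an induced subgraph, where no vertex of S(k) other than possibly the vertices v_0, …, v_k has a neighbor outside S(k). Then in any proper k-orientation D of G, one has d⁻_D(v_j) = j for each j ∈ {0, 1, …, k}; moreover, every edge uv of G with v ∈ V(S(k)) and u ∈ V(G)∖V(S(k)) is oriented toward u in D. -/

import Mathlib

open SimpleGraph

structure Orient {V : Type*} (G : SimpleGraph V) where
  dir : V → V → Bool
  adj_of_dir : ∀ u v, dir u v = true → G.Adj u v
  dir_iff : ∀ u v, G.Adj u v → (dir u v = true ↔ ¬ dir v u = true)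

def Orient.inDeg {V : Type*} [Fintype V] {G : SimpleGraph V} (D : Orient G) (v : V) : ℕ :=
  (Finset.univ.filter (fun u => D.dir u v = true)).card

def Orient.Proper {V : Type*} [Fintype V] {G : SimpleGraph V} (D : Orient G) : Prop :=
  ∀ u v, G.Adj u v → D.inDeg u ≠ D.inDeg v

/-- The graph `S(k)`: a clique `K = {v_0, …, v_k}` (the left summand); for each
`j ∈ {0, …, k-1}` a clique `K^j` on `k + 1 - j` vertices meeting the rest of the graph
exactly in `v_j` (its `k - j` new vertices form the fiber over `j` in the right
summand); and additional edges from `v_j` to all vertices of `K^ℓ` for every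
`j ∈ {0, …, k-2}` and `ℓ ∈ {j+1, …, k-1}`. Thus `v_a` is adjacent to the new vertices
of `K^j` exactly when `a ≤ j`. -/
def Sgraph (k : ℕ) : SimpleGraph (Fin (k + 1) ⊕ Σ j : Fin k, Fin (k - j.val)) where
  Adj x y :=
    match x, y with
    | .inl a, .inl b => a ≠ b
    | .inl a, .inr p => a.val ≤ p.1.val
    | .inr p, .inl a => a.val ≤ p.1.val
    | .inr p, .inr q => p.1 = q.1 ∧ p ≠ q
  symm := by
    constructor
    rintro (a | p) (b | q) h
    · exact Ne.symm h
    · exact h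
    · exact h
    · exact ⟨h.1.symm, h.2.symm⟩
  loopless := by
    constructor
    rintro (a | p) h
    · exact h rfl
    · exact h.2 rfl

/-- An injective function on `Fin (n+1)` with values in `{0,…,n}` and `f i ≥ i`
must be the identity. -/
lemma forced_id {n : ℕ} (f : Fin (n + 1) → ℕ) (hinj : Function.Injective f)
    (hub : ∀ i, f i ≤ n) (hlb : ∀ i : Fin (n + 1), (i : ℕ) ≤ f i) :
    ∀ i : Fin (n + 1), f i = (i : ℕ) := by
  have key : ∀ d (i : Fin (n + 1)), n - d ≤ (i : ℕ) → f i = (i : ℕ) := by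
    intro d
    induction d with
    | zero =>
      intro i hi
      have h1 : (i : ℕ) = n := le_antisymm (Nat.le_of_lt_succ i.isLt) (by simpa using hi)
      have h2 := hub i
      have h3 := hlb i
      omega
    | succ d ih =>
      intro i hi
      by_contra hne
      have hgt : (i : ℕ) < f i := lt_of_le_of_ne (hlb i) (fun h => hne h.symm)
      set m : Fin (n + 1) := ⟨f i, Nat.lt_succ_of_le (hub i)⟩ with hm
      have hmval : (m : ℕ) = f i := rfl
      have hfm : f m = (m : ℕ) := ih m (by omega)
      have : m = i := hinj (by rw [hfm, hmval])
      have : (m : ℕ) = (i : ℕ) := congrArg Fin.val this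
      omega
  intro i
  exact key n i (by simp)

/-- In a proper `k`-orientation, no arc enters a clique of size `k+1` from outside. -/
lemma clique_no_incoming {V : Type*} [Fintype V] {G : SimpleGraph V} (D : Orient G)
    (hproper : D.Proper) (k : ℕ) (hkor : ∀ v, D.inDeg v ≤ k)
    (S : Finset V) (hcard : S.card = k + 1)
    (hclique : ∀ u ∈ S, ∀ v ∈ S, u ≠ v → G.Adj u v) :
    ∀ u ∉ S, ∀ v ∈ S, ¬ D.dir u v = true := by
  classical
  set f : V → V → ℕ := fun u v => if D.dir u v = true then 1 else 0 with hf
  -- pointwise pairing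
  have hpair : ∀ u ∈ S, ∀ v ∈ S, f u v + f v u = if u = v then 0 else 1 := by
    intro u hu v hv
    by_cases huv : u = v
    · subst huv
      simp only [if_pos rfl, hf]
      rcases h : D.dir u u with _ | _
      · simp
      · exact absurd (D.adj_of_dir u u h) (G.loopless.irrefl u)
    · have hadj : G.Adj u v := hclique u hu v hv huv
      have hiff := D.dir_iff u v hadj
      simp only [if_neg huv, hf]
      rcases h1 : D.dir u v with _ | _ <;> rcases h2 : D.dir v u with _ | _ <;>
        simp_all
  -- internal double sum
  have hint2 : (∑ v ∈ S, ∑ u ∈ S, f u v) * 2 = (k + 1) * k := by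
    have hswap : ∑ v ∈ S, ∑ u ∈ S, f u v = ∑ v ∈ S, ∑ u ∈ S, f v u := Finset.sum_comm
    have h1 : (∑ v ∈ S, ∑ u ∈ S, f u v) * 2
        = ∑ v ∈ S, ∑ u ∈ S, (f u v + f v u) := by
      rw [mul_two]
      nth_rewrite 2 [hswap]
      rw [← Finset.sum_add_distrib]
      exact Finset.sum_congr rfl fun v _ => (Finset.sum_add_distrib).symm
    rw [h1]
    have h2 : ∀ v ∈ S, ∑ u ∈ S, (f u v + f v u) = k := by
      intro v hv
      have h3 : ∑ u ∈ S, (f u v + f v u) = ∑ u ∈ S, (if u = v then 0 else 1) :=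
        Finset.sum_congr rfl fun u hu => hpair u hu v hv
      rw [h3]
      have h4 : ∑ u ∈ S, ((if u = v then (0 : ℕ) else 1) + (if u = v then 1 else 0))
          = ∑ u ∈ S, 1 := Finset.sum_congr rfl fun u _ => by by_cases h : u = v <;> simp [h]
      rw [Finset.sum_add_distrib] at h4
      have h5 : ∑ u ∈ S, (if u = v then (1 : ℕ) else 0) = 1 := by
        rw [Finset.sum_ite_eq' S v (fun _ => 1), if_pos hv]
      rw [h5, Finset.sum_const, smul_eq_mul, mul_one, hcard] at h4
      omega
    rw [Finset.sum_congr rfl h2, Finset.sum_const, smul_eq_mul, hcard]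
  -- total sum of indegrees over S
  have hsumdeg : (∑ v ∈ S, D.inDeg v) * 2 = (k + 1) * k := by
    have hinj : ∀ x ∈ S, ∀ y ∈ S, D.inDeg x = D.inDeg y → x = y := by
      intro x hx y hy h
      by_contra hne
      exact hproper x y (hclique x hx y hy hne) h
    have himg : S.image D.inDeg = Finset.range (k + 1) := by
      apply Finset.eq_of_subset_of_card_le
      · intro x hx
        obtain ⟨v, _, rfl⟩ := Finset.mem_image.mp hx
        exact Finset.mem_range.mpr (Nat.lt_succ_of_le (hkor v))
      · rw [Finset.card_range, Finset.card_image_of_injOn hinj, hcard]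
    have hsi : ∑ x ∈ S.image D.inDeg, x = ∑ v ∈ S, D.inDeg v := Finset.sum_image hinj
    rw [← hsi, himg]
    simpa using Finset.sum_range_id_mul_two (k + 1)
  -- split indegrees
  have hsplit : ∀ v, D.inDeg v
      = (S.filter fun u => D.dir u v = true).card
        + ((Sᶜ).filter fun u => D.dir u v = true).card := by
    intro v
    unfold Orient.inDeg
    rw [← Finset.card_union_of_disjoint
        (Finset.disjoint_filter_filter disjoint_compl_right),
      ← Finset.filter_union, Finset.union_compl]
  have hcf : ∀ v, (S.filter fun u => D.dir u v = true).card = ∑ u ∈ S, f u v := by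
    intro v; rw [Finset.card_filter]
  have hext : ∑ v ∈ S, ((Sᶜ).filter fun u => D.dir u v = true).card = 0 := by
    have h6 : ∑ v ∈ S, D.inDeg v
        = ∑ v ∈ S, ∑ u ∈ S, f u v
          + ∑ v ∈ S, ((Sᶜ).filter fun u => D.dir u v = true).card := by
      rw [← Finset.sum_add_distrib]
      exact Finset.sum_congr rfl fun v _ => by rw [hsplit v, hcf v]
    omega
  intro u hu v hv hdir
  have h7 : ((Sᶜ).filter fun w => D.dir w v = true).card = 0 :=
    (Finset.sum_eq_zero_iff.mp hext) v hv
  have h8 : u ∈ (Sᶜ).filter fun w => D.dir w v = true :=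
    Finset.mem_filter.mpr ⟨Finset.mem_compl.mpr hu, hdir⟩
  rw [Finset.card_eq_zero] at h7
  rw [h7] at h8
  exact absurd h8 (Finset.notMem_empty u)

/-- If `S(k)` (`k ≥ 1`) is an induced subgraph of `G` (via the embedding `φ`) in which
only the vertices `v_0, …, v_k` may have neighbours outside `S(k)`, then in any proper
`k`-orientation of `G` the vertex `v_j` has indegree `j`, and every edge between `S(k)`
and the rest of `G` is oriented away from `S(k)`. -/
theorem Sgraph_indegrees_forced {V : Type*} [Fintype V] (G : SimpleGraph V)
    (k : ℕ) (hk : 1 ≤ k) (φ : Sgraph k ↪g G)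
    (houtside : ∀ (p : Σ j : Fin k, Fin (k - j.val)) (u : V),
      u ∉ Set.range φ → ¬ G.Adj (φ (Sum.inr p)) u)
    (D : Orient G) (hproper : D.Proper) (hkor : ∀ v, D.inDeg v ≤ k) :
    (∀ j : Fin (k + 1), D.inDeg (φ (Sum.inl j)) = j.val) ∧
    (∀ (x : Fin (k + 1) ⊕ Σ j : Fin k, Fin (k - j.val)) (u : V),
      u ∉ Set.range φ → G.Adj (φ x) u → D.dir (φ x) u = true) := by
    classical
  -- the cliques C_j and the `no incoming arc' property
  have hS : ∀ (j : ℕ), j < k → ∃ S : Finset V,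
      (∀ a : Fin (k + 1), a.val ≤ j → φ (Sum.inl a) ∈ S) ∧
      (∀ m : Fin (k + 1), j < m.val → φ (Sum.inl m) ∉ S) ∧
      (∀ u ∉ S, ∀ v ∈ S, ¬ D.dir u v = true) := by
    intro j hj
    set P : (Fin (k + 1) ⊕ Σ j' : Fin k, Fin (k - j'.val)) → Prop :=
      fun x => match x with
        | .inl a => a.val ≤ j
        | .inr p => p.1.val = j with hP
    set S : Finset V := (Finset.univ.filter P).image φ with hSdef
    have hmem : ∀ x, P x → φ x ∈ S := by
      intro x hx
      exact Finset.mem_image.mpr ⟨x, Finset.mem_filter.mpr ⟨Finset.mem_univ x, hx⟩, rfl⟩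
    have hmem' : ∀ v ∈ S, ∃ x, P x ∧ φ x = v := by
      intro v hv
      obtain ⟨x, hx, rfl⟩ := Finset.mem_image.mp hv
      exact ⟨x, (Finset.mem_filter.mp hx).2, rfl⟩
    -- cardinality
    have hfilter : Finset.univ.filter P
        = ((Finset.univ.filter fun a : Fin (k + 1) => a.val ≤ j).image Sum.inl)
          ∪ ((Finset.univ.filter fun p : (Σ j' : Fin k, Fin (k - j'.val)) => p.1.val = j).image
              Sum.inr) := by
      ext x
      rcases x with a | p <;> simp [hP]
    have hc1 : (Finset.univ.filter fun a : Fin (k + 1) => a.val ≤ j).card = j + 1 := by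
      have : (Finset.univ.filter fun a : Fin (k + 1) => a.val ≤ j)
          = (Finset.univ : Finset (Fin (j + 1))).image (Fin.castLE (by omega)) := by
        ext a
        simp only [Finset.mem_filter, Finset.mem_univ, true_and, Finset.mem_image]
        constructor
        · intro ha
          exact ⟨⟨a.val, by omega⟩, by ext; simp⟩
        · rintro ⟨b, rfl⟩
          exact Nat.le_of_lt_succ b.isLt
      rw [this, Finset.card_image_of_injective _ (Fin.castLE_injective _)]
      simp
    have hc2 : (Finset.univ.filter
        fun p : (Σ j' : Fin k, Fin (k - j'.val)) => p.1.val = j).card = k - j := by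
      have : (Finset.univ.filter fun p : (Σ j' : Fin k, Fin (k - j'.val)) => p.1.val = j)
          = (Finset.univ : Finset (Fin (k - j))).image (fun i => ⟨⟨j, hj⟩, i⟩) := by
        ext p
        simp only [Finset.mem_filter, Finset.mem_univ, true_and, Finset.mem_image]
        constructor
        · obtain ⟨j', i⟩ := p
          intro h
          have hj' : j' = ⟨j, hj⟩ := Fin.ext h
          subst hj'
          exact ⟨i, rfl⟩
        · rintro ⟨i, rfl⟩
          rfl
      have hinj2 : Function.Injective
          (fun i : Fin (k - j) => (⟨⟨j, hj⟩, i⟩ : Σ j' : Fin k, Fin (k - j'.val))) :=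
        fun i i' h => by simpa using h
      rw [this, Finset.card_image_of_injective _ hinj2]
      simp
    have hcardP : (Finset.univ.filter P).card = k + 1 := by
      rw [hfilter, Finset.card_union_of_disjoint, Finset.card_image_of_injective _
          Sum.inl_injective, Finset.card_image_of_injective _ Sum.inr_injective, hc1, hc2]
      · omega
      · simp [Finset.disjoint_left]
    have hcard : S.card = k + 1 := by
      rw [hSdef, Finset.card_image_of_injective _ φ.injective, hcardP]
    -- clique
    have hclique : ∀ u ∈ S, ∀ v ∈ S, u ≠ v → G.Adj u v := by
      intro u hu v hv huv
      obtain ⟨x, hx, rfl⟩ := hmem' u hu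
      obtain ⟨y, hy, rfl⟩ := hmem' v hv
      have hxy : x ≠ y := fun h => huv (congrArg φ h)
      rw [φ.map_adj_iff]
      rcases x with a | p <;> rcases y with b | q
      · show a ≠ b
        exact fun h => hxy (congrArg Sum.inl h)
      · show a.val ≤ q.1.val
        simp only [hP] at hx hy
        omega
      · show b.val ≤ p.1.val
        simp only [hP] at hx hy
        omega
      · refine ⟨?_, fun h => hxy (congrArg Sum.inr h)⟩
        simp only [hP] at hx hy
        exact Fin.ext (hx.trans hy.symm)
    refine ⟨S, fun a ha => hmem (Sum.inl a) ha, ?_, ?_⟩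
    · intro m hm hmS
      obtain ⟨x, hx, hxm⟩ := hmem' _ hmS
      have : x = Sum.inl m := φ.injective hxm
      subst this
      simp only [hP] at hx
      omega
    · exact clique_no_incoming D hproper k hkor S hcard hclique
  -- forced arcs between the v_i
  have harc : ∀ (j : ℕ) (hj : j < k) (a m : Fin (k + 1)), a.val ≤ j → j < m.val →
      D.dir (φ (Sum.inl a)) (φ (Sum.inl m)) = true := by
    intro j hj a m ha hm
    obtain ⟨S, hin, hout, hno⟩ := hS j hj
    have hadj : G.Adj (φ (Sum.inl a)) (φ (Sum.inl m)) := by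
      rw [φ.map_adj_iff]
      show a ≠ m
      intro h
      rw [h] at ha
      omega
    by_contra h
    exact hno _ (hout m hm) _ (hin a ha)
      ((D.dir_iff _ _ hadj.symm).mpr h)
  -- the in-neighbour witnesses
  have hT : ∀ m : Fin (k + 1), ∃ T : Finset V,
      T ⊆ Finset.univ.filter (fun w => D.dir w (φ (Sum.inl m)) = true) ∧
      T.card = (m : ℕ) ∧ ∀ u ∈ T, u ∈ Set.range φ := by
    intro m
    refine ⟨(Finset.univ : Finset (Fin m.val)).image
      (fun b => φ (Sum.inl ⟨b.val, by omega⟩)), ?_, ?_, ?_⟩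
    · intro u hu
      obtain ⟨b, _, rfl⟩ := Finset.mem_image.mp hu
      refine Finset.mem_filter.mpr ⟨Finset.mem_univ _, ?_⟩
      exact harc b.val (by omega) ⟨b.val, by omega⟩ m (le_refl _) b.isLt
    · rw [Finset.card_image_of_injective _ (fun b b' h => by
        have := φ.injective h
        simp only [Sum.inl.injEq, Fin.mk.injEq] at this
        exact Fin.ext this)]
      simp
    · intro u hu
      obtain ⟨b, _, rfl⟩ := Finset.mem_image.mp hu
      exact ⟨_, rfl⟩
  have hlow : ∀ m : Fin (k + 1), (m : ℕ) ≤ D.inDeg (φ (Sum.inl m)) := by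
    intro m
    obtain ⟨T, hsub, hc, _⟩ := hT m
    calc (m : ℕ) = T.card := hc.symm
      _ ≤ _ := Finset.card_le_card hsub
  have hinjf : Function.Injective (fun m : Fin (k + 1) => D.inDeg (φ (Sum.inl m))) := by
    intro m m' h
    by_contra hne
    exact hproper _ _ (φ.map_adj_iff.mpr
      (show (Sgraph k).Adj (Sum.inl m) (Sum.inl m') from hne)) h
  have part1 : ∀ m : Fin (k + 1), D.inDeg (φ (Sum.inl m)) = (m : ℕ) :=
    forced_id _ hinjf (fun i => hkor _) hlow
  refine ⟨part1, ?_⟩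
  rintro (a | p) u hu hadj
  · obtain ⟨T, hsub, hc, hrange⟩ := hT a
    have hTeq : T = Finset.univ.filter (fun w => D.dir w (φ (Sum.inl a)) = true) := by
      apply Finset.eq_of_subset_of_card_le hsub
      have : (Finset.univ.filter (fun w => D.dir w (φ (Sum.inl a)) = true)).card
          = D.inDeg (φ (Sum.inl a)) := rfl
      rw [this, part1 a, hc]
    rw [D.dir_iff _ _ hadj]
    intro hback
    have : u ∈ T := by
      rw [hTeq]
      exact Finset.mem_filter.mpr ⟨Finset.mem_univ _, hback⟩
    exact hu (hrange u this)
  · exact absurd hadj (houtside p u hu)
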